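/- Let A be a closed, densely defined (possibly unbounded) linear operator on a complex Hilbert space H satisfying A*A = A² (equality of operators, including domains). Then A is self-adjoint. -/

import Mathlib

open LinearPMap ComplexConjugate
local notation "⟪" x ", " y "⟫" => @inner ℂ _ _ x y
variable {H : Type*} [NormedAddCommGroup H] [InnerProductSpace ℂ H] [CompleteSpace H]

/-- Composition of two (possibly unbounded) partially defined operators, with the
natural domain \`{x ∈ D(f) : f x ∈ D(g)}\`. -/
noncomputable def LinearPMap.pcomp (g f : H →ₗ.[ℂ] H) : H →ₗ.[ℂ] H :=
  g.comp (f.domRestrict ((g.domain.comap f.toFun).map f.domain.subtype))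
    (fun x => by
      obtain ⟨hS, hD⟩ := x.2
      obtain ⟨y, hy, hyx⟩ := hS
      rw [LinearPMap.domRestrict_apply (y := y) hyx.symm]
      exact hy)

omit [CompleteSpace H] in
theorem pcomp_mem (g f : H →ₗ.[ℂ] H) (x : H) : x ∈ (g.pcomp f).domain ↔ ∃ hx : x ∈ f.domain, f ⟨x, hx⟩ ∈ g.domain := by
  unfold LinearPMap.pcomp
  constructor
  · rintro ⟨⟨y, hy, rfl⟩, hD⟩
    exact ⟨y.2, by simpa using hy⟩
  · rintro ⟨hx, hgx⟩
    exact ⟨⟨⟨x, hx⟩, hgx, rfl⟩, hx⟩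

omit [CompleteSpace H] in
theorem pcomp_apply (g f : H →ₗ.[ℂ] H) (x : H) (hm : x ∈ (g.pcomp f).domain)
    (hx : x ∈ f.domain) (hgx : f ⟨x, hx⟩ ∈ g.domain) :
    (g.pcomp f) ⟨x, hm⟩ = g ⟨f ⟨x, hx⟩, hgx⟩ := by
  show g.toFun _ = _
  congr 1

theorem vonNeumann (T : H →ₗ.[ℂ] H) (hd : Dense (T.domain : Set H)) (hc : T.IsClosed) (b : H) :
    ∃ x : T.domain, ∃ hx : T x ∈ T.adjoint.domain, (x:H) + T.adjoint ⟨T x, hx⟩ = b := by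
  classical
  set e : WithLp 2 (H × H) ≃L[ℂ] H × H := WithLp.prodContinuousLinearEquiv 2 ℂ H H
  set G : Submodule ℂ (WithLp 2 (H × H)) := T.graph.comap (e : WithLp 2 (H × H) →ₗ[ℂ] H × H)
  have hGclosed : IsClosed (G : Set (WithLp 2 (H × H))) := hc.preimage e.continuous
  haveI : CompleteSpace G := hGclosed.completeSpace_coe
  obtain ⟨y, hy, z, hz, hsum⟩ := G.exists_add_mem_mem_orthogonal (e.symm (b, 0))
  -- y corresponds to a graph element
  have hyG : e y ∈ T.graph := hy
  rw [LinearPMap.mem_graph_iff] at hyG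
  obtain ⟨x, hx1, hx2⟩ := hyG
  -- characterize z
  have hzc : ∀ w : T.domain, ⟪(w : H), (e z).1⟫ + ⟪T w, (e z).2⟫ = 0 := by
    intro w
    have hmem : e.symm ((w : H), T w) ∈ G := by
      show e (e.symm _) ∈ T.graph
      rw [e.apply_symm_apply]
      exact T.mem_graph w
    have := (Submodule.mem_orthogonal G z).mp hz _ hmem
    rw [← this]
    rw [show z = e.symm (e z) from (e.symm_apply_apply z).symm]
    rfl
  have hzdom : (e z).2 ∈ T.adjoint.domain := by
    apply LinearPMap.mem_adjoint_domain_of_exists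
    refine ⟨-(e z).1, fun w => ?_⟩
    have := hzc w
    rw [inner_neg_left]
    have h2 : ⟪T w, (e z).2⟫ = -⟪(w:H), (e z).1⟫ := by linear_combination this
    rw [← inner_conj_symm ((e z).2) (T w), h2]
    simp [inner_conj_symm]
  have hzval : T.adjoint ⟨(e z).2, hzdom⟩ = -(e z).1 := by
    apply LinearPMap.adjoint_apply_eq hd
    intro w
    have := hzc w
    rw [inner_neg_left]
    have h2 : ⟪T w, (e z).2⟫ = -⟪(w:H), (e z).1⟫ := by linear_combination this
    rw [← inner_conj_symm ((e z).2) (T w), h2]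
    simp [inner_conj_symm]
  -- extract coordinates from hsum
  have hsum' : (b, 0) = ((x : H), T x) + e z := by
    have := congrArg e hsum
    rw [e.apply_symm_apply] at this
    rw [this, _root_.map_add]
    congr 1
    rw [Prod.ext_iff]
    exact ⟨hx1.symm, hx2.symm⟩
  have hb : b = (x : H) + (e z).1 := congrArg Prod.fst hsum'
  have h0 : (0 : H) = (T x : H) + (e z).2 := congrArg Prod.snd hsum'
  have hTx : (T x : H) = -(e z).2 := by
    have := h0.symm
    rw [add_eq_zero_iff_eq_neg] at this
    exact this
  have hmem : (T x : H) ∈ T.adjoint.domain := by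
    rw [hTx]; exact neg_mem hzdom
  refine ⟨x, hmem, ?_⟩
  have heq : (⟨(T x : H), hmem⟩ : T.adjoint.domain) = -⟨(e z).2, hzdom⟩ := by
    ext; exact hTx
  rw [heq, LinearPMap.map_neg, hzval, hb]
  abel

theorem stmt17 (A : H →ₗ.[ℂ] H) (hdense : Dense (A.domain : Set H)) (hclosed : A.IsClosed)
    (h : A.adjoint.pcomp A = A.pcomp A) : IsSelfAdjoint A := by
  have fa : ∀ (u : A.adjoint.domain) (w : A.domain), ⟪A.adjoint u, (w:H)⟫ = ⟪(u:H), A w⟫ :=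
    adjoint_isFormalAdjoint hdense
  -- extract domain and value info from `h`
  have hdomeq : (A.adjoint.pcomp A).domain = (A.pcomp A).domain := by rw [h]
  have hdom : ∀ x : A.domain, ((A x : H) ∈ A.adjoint.domain ↔ (A x : H) ∈ A.domain) := by
    intro x
    have h1 : (x : H) ∈ (A.adjoint.pcomp A).domain ↔ (x : H) ∈ (A.pcomp A).domain := by
      rw [hdomeq]
    rw [pcomp_mem, pcomp_mem] at h1
    constructor
    · intro hx
      obtain ⟨hx', hgx⟩ := h1.mp ⟨x.2, by rwa [show (⟨(x:H), x.2⟩ : A.domain) = x from rfl]⟩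
      rwa [show (⟨(x:H), hx'⟩ : A.domain) = x from rfl] at hgx
    · intro hx
      obtain ⟨hx', hgx⟩ := h1.mpr ⟨x.2, by rwa [show (⟨(x:H), x.2⟩ : A.domain) = x from rfl]⟩
      rwa [show (⟨(x:H), hx'⟩ : A.domain) = x from rfl] at hgx
  have hval : ∀ (x : A.domain) (h1 : (A x : H) ∈ A.adjoint.domain) (h2 : (A x : H) ∈ A.domain),
      A.adjoint ⟨A x, h1⟩ = A ⟨A x, h2⟩ := by
    intro x hx1 hx2
    have hm1 : (x : H) ∈ (A.adjoint.pcomp A).domain := by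
      rw [pcomp_mem]
      exact ⟨x.2, by rwa [show (⟨(x:H), x.2⟩ : A.domain) = x from rfl]⟩
    have hm2 : (x : H) ∈ (A.pcomp A).domain := hdomeq ▸ hm1
    have e1 : (A.adjoint.pcomp A) ⟨(x:H), hm1⟩ = A.adjoint ⟨A x, hx1⟩ := by
      rw [pcomp_apply _ _ _ hm1 x.2]
    have e2 : (A.pcomp A) ⟨(x:H), hm2⟩ = A ⟨A x, hx2⟩ := by
      rw [pcomp_apply _ _ _ hm2 x.2]
    rw [← e1, ← e2]
    exact (LinearPMap.ext_iff.mp h).2 (x := (x:H)) (hf := hm1) (hg := hm2)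
  choose Bf hmem hsol using vonNeumann A hdense hclosed
  have hmemT : ∀ b, (A (Bf b) : H) ∈ A.domain := fun b => (hdom (Bf b)).mp (hmem b)
  set Cd : H → A.domain := fun b => ⟨A (Bf b), hmemT b⟩ with hCd
  -- `A (Cd b)` is "T² B b = (I - B) b"
  have hTT : ∀ b, A (Cd b) = b - ↑(Bf b) := by
    intro b
    have := hsol b
    rw [hval (Bf b) (hmem b) (hmemT b)] at this
    exact eq_sub_of_add_eq' this
  -- uniqueness of solutions
  have huniq : ∀ (x : A.domain) (hx : (A x : H) ∈ A.adjoint.domain) (b : H),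
      (x:H) + A.adjoint ⟨A x, hx⟩ = b → (x:H) = ↑(Bf b) := by
    intro x hx b hb
    set d : A.domain := x - Bf b with hd
    have hTd : A d = A x - A (Bf b) := A.map_sub x (Bf b)
    have hTdmem : (A d : H) ∈ A.adjoint.domain := by rw [hTd]; exact sub_mem hx (hmem b)
    have hsub : (⟨A d, hTdmem⟩ : A.adjoint.domain) = ⟨A x, hx⟩ - ⟨A (Bf b), hmem b⟩ := by
      ext; simp [hTd]
    have hzero : (d:H) + A.adjoint ⟨A d, hTdmem⟩ = 0 := by
      rw [hsub, LinearPMap.map_sub, hd]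
      push_cast
      rw [sub_add_sub_comm, hb, hsol b, sub_self]
    have hinner : ⟪((d:H)), ((d:H))⟫ + ⟪((A d : H)), ((A d : H))⟫ = 0 := by
      have h0 : ⟪(d:H) + A.adjoint ⟨A d, hTdmem⟩, (d:H)⟫ = 0 := by rw [hzero, inner_zero_left]
      rw [inner_add_left, fa ⟨A d, hTdmem⟩ d] at h0
      exact h0
    have hinner' : ‖(d:H)‖ ^ 2 + ‖(A d : H)‖ ^ 2 = 0 := by
      have h5 := congrArg (RCLike.re (K := ℂ)) hinner
      have e1 := inner_self_eq_norm_sq (𝕜 := ℂ) ((d:H))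
      have e2 := inner_self_eq_norm_sq (𝕜 := ℂ) ((A d : H))
      rw [_root_.map_add, e1, e2] at h5
      simpa using h5
    have hd0 : ‖(d:H)‖ = 0 := by nlinarith [norm_nonneg (d:H), norm_nonneg (A d : H)]
    have : (d : H) = 0 := norm_eq_zero.mp hd0
    rw [hd] at this
    push_cast at this
    exact sub_eq_zero.mp this
  -- linearity of B
  have hBadd : ∀ a b, Bf (a + b) = Bf a + Bf b := by
    intro a b
    have hx : (A (Bf a + Bf b) : H) ∈ A.adjoint.domain := by
      rw [A.map_add]; exact add_mem (hmem a) (hmem b)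
    have key : (↑(Bf a + Bf b) : H) = ↑(Bf (a + b)) := by
      apply huniq _ hx
      have hsub : (⟨A (Bf a + Bf b), hx⟩ : A.adjoint.domain)
          = ⟨A (Bf a), hmem a⟩ + ⟨A (Bf b), hmem b⟩ := by
        ext; simp [A.map_add]
      rw [hsub, LinearPMap.map_add]
      push_cast
      rw [add_add_add_comm, hsol a, hsol b]
    exact (Subtype.ext key).symm
  have hBsmul : ∀ (c : ℂ) b, Bf (c • b) = c • Bf b := by
    intro c b
    have hx : (A (c • Bf b) : H) ∈ A.adjoint.domain := by
      rw [A.map_smul]; exact Submodule.smul_mem _ c (hmem b)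
    have key : (↑(c • Bf b) : H) = ↑(Bf (c • b)) := by
      apply huniq _ hx
      have hsub : (⟨A (c • Bf b), hx⟩ : A.adjoint.domain)
          = c • ⟨A (Bf b), hmem b⟩ := by
        ext; simp [A.map_smul]
      rw [hsub, LinearPMap.map_smul]
      push_cast
      rw [← smul_add, hsol b]
    exact (Subtype.ext key).symm
  -- the basic identity ⟪B h, k⟫ = ⟪B h, B k⟫ + ⟪C h, C k⟫
  have haux : ∀ h k : H, ⟪(Bf h : H), k⟫ = ⟪(Bf h : H), (Bf k : H)⟫ + ⟪(A (Bf h) : H), (A (Bf k) : H)⟫ := by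
    intro h' k
    conv_lhs => rw [← hsol k]
    rw [inner_add_right]
    congr 1
    rw [← inner_conj_symm, fa ⟨A (Bf k), hmem k⟩ (Bf h'), inner_conj_symm]
  -- B is symmetric
  have hBsym : ∀ h k : H, ⟪(Bf h : H), k⟫ = ⟪h, (Bf k : H)⟫ := by
    intro h' k
    rw [haux h' k]
    calc ⟪((Bf h' : H)), ((Bf k : H))⟫ + ⟪(A (Bf h') : H), (A (Bf k) : H)⟫
        = conj (⟪((Bf k : H)), ((Bf h' : H))⟫ + ⟪(A (Bf k) : H), (A (Bf h') : H)⟫) := by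
          rw [_root_.map_add, inner_conj_symm, inner_conj_symm]
      _ = conj ⟪((Bf k : H)), h'⟫ := by rw [← haux k h']
      _ = ⟪h', ((Bf k : H))⟫ := inner_conj_symm _ _
  -- bounds
  have hCb : ∀ b, ‖A (Bf b)‖ ≤ ‖b‖ := by
    intro b
    have e := haux b b
    have hre := congrArg (RCLike.re (K := ℂ)) e
    rw [_root_.map_add, inner_self_eq_norm_sq, inner_self_eq_norm_sq] at hre
    have habs : RCLike.re (K := ℂ) ⟪((Bf b : H)), b⟫ ≤ ‖(Bf b : H)‖ * ‖b‖ := by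
      refine le_trans (RCLike.re_le_norm _) ?_
      exact norm_inner_le_norm _ _
    rw [hre] at habs
    nlinarith [norm_nonneg (A (Bf b) : H), norm_nonneg (Bf b : H), norm_nonneg b,
      sq_nonneg (‖(Bf b : H)‖ - ‖b‖ / 2), sq_nonneg (‖(A (Bf b) : H)‖ - ‖b‖)]
  -- key commutation: C x = B (A x) for x in the domain
  have hkey : ∀ x : A.domain, A (Bf (x : H)) = ↑(Bf (A x)) := by
    intro x
    have hmemD : (A (Cd (x:H)) : H) ∈ A.domain := by
      rw [hTT]; exact sub_mem x.2 (Bf (x:H)).2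
    have hmemAdj : (A (Cd (x:H)) : H) ∈ A.adjoint.domain := (hdom (Cd (x:H))).mpr hmemD
    have key : (↑(Cd (x:H)) : H) = ↑(Bf (A x)) := by
      apply huniq (Cd (x:H)) hmemAdj
      rw [hval (Cd (x:H)) hmemAdj hmemD]
      have hsub : (⟨A (Cd (x:H)), hmemD⟩ : A.domain) = x - Bf (x:H) := by
        ext
        rw [show ((⟨A (Cd (x:H)), hmemD⟩ : A.domain) : H) = A (Cd (x:H)) from rfl, hTT]
        push_cast
        rfl
      rw [hsub, LinearPMap.map_sub]
      show (A (Bf (x:H)) : H) + (A x - A (Bf (x:H))) = A x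
      abel
    exact key
  -- sigma identity
  have hE : ∀ h k : H, ⟪A (Bf h), k⟫ - ⟪h, A (Bf k)⟫
      = ⟪A (Bf h), (Bf k : H)⟫ - ⟪(Bf h : H), A (Bf k)⟫ := by
    intro h' k
    have t2 : ⟪(A (Bf h') : H), (A.adjoint ⟨A (Bf k), hmem k⟩ : H)⟫
        = ⟪h', (A (Bf k) : H)⟫ - ⟪((Bf h' : H)), (A (Bf k) : H)⟫ := by
      rw [hval (Bf k) (hmem k) (hmemT k)]
      calc ⟪(A (Bf h') : H), (A (⟨A (Bf k), hmemT k⟩ : A.domain) : H)⟫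
          = ⟪(A.adjoint ⟨A (Bf h'), hmem h'⟩ : H), ((⟨A (Bf k), hmemT k⟩ : A.domain) : H)⟫ :=
            (fa ⟨A (Bf h'), hmem h'⟩ ⟨A (Bf k), hmemT k⟩).symm
        _ = ⟪(A (Cd h') : H), (A (Bf k) : H)⟫ := by
            rw [hval (Bf h') (hmem h') (hmemT h')]
        _ = ⟪h' - ↑(Bf h'), (A (Bf k) : H)⟫ := by rw [hTT h']
        _ = ⟪h', (A (Bf k) : H)⟫ - ⟪((Bf h' : H)), (A (Bf k) : H)⟫ := inner_sub_left _ _ _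
    have step1 : ⟪(A (Bf h') : H), k⟫ = ⟪(A (Bf h') : H), ((Bf k : H))⟫
        + (⟪h', (A (Bf k) : H)⟫ - ⟪((Bf h' : H)), (A (Bf k) : H)⟫) := by
      conv_lhs => rw [← hsol k]
      rw [inner_add_right, t2]
    linear_combination step1
  -- C is symmetric
  have hBsub : ∀ a b, Bf (a - b) = Bf a - Bf b := by
    intro a b
    rw [sub_eq_add_neg, hBadd, ← neg_one_smul ℂ b, hBsmul, neg_one_smul]
    abel
  have hCadd : ∀ a b : H, (A (Bf (a + b)) : H) = A (Bf a) + A (Bf b) := by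
    intro a b; rw [hBadd, A.map_add]
  have hCsub : ∀ a b : H, (A (Bf (a - b)) : H) = A (Bf a) - A (Bf b) := by
    intro a b; rw [hBsub, A.map_sub]
  have hCsmul : ∀ (c : ℂ) (b : H), (A (Bf (c • b)) : H) = c • (A (Bf b) : H) := by
    intro c b; rw [hBsmul, A.map_smul]
  have hCcont : Continuous (fun b => (A (Bf b) : H)) := by
    refine (LipschitzWith.of_dist_le_mul (K := 1) fun a b => ?_).continuous
    rw [dist_eq_norm, ← hCsub, NNReal.coe_one, one_mul, dist_eq_norm]
    exact hCb (a - b)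
  set M : Submodule ℂ H :=
    (Submodule.span ℂ (Set.range (fun b : H => b - ((Bf b : H))))).topologicalClosure with hM
  have hSsym : ∀ a b : H, ⟪a - ↑(Bf a), b⟫ = ⟪a, b - ↑(Bf b)⟫ := by
    intro a b
    rw [inner_sub_left, inner_sub_right, hBsym]
  have hMperp : ∀ u, u ∈ Mᗮ → (↑(Bf u) : H) = u := by
    intro u hu
    have hgen : ∀ v : H, (v - ↑(Bf v)) ∈ M := fun v =>
      Submodule.le_topologicalClosure _ (Submodule.subset_span ⟨v, rfl⟩)
    have h2 := (Submodule.mem_orthogonal _ u).mp hu _ (hgen (u - ↑(Bf u)))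
    rw [hSsym] at h2
    have h3 := inner_self_eq_zero.mp h2
    rw [sub_eq_zero] at h3
    exact h3.symm
  have hCzero : ∀ u : H, (↑(Bf u) : H) = u → (A (Bf u) : H) = 0 := by
    intro u hu
    have e := haux u u
    rw [hu] at e
    have : ⟪(A (Bf u) : H), (A (Bf u) : H)⟫ = 0 := by linear_combination -e
    exact inner_self_eq_zero.mp this
  have hred : ∀ h' b : H, ⟪(A (Bf h') : H), ((Bf b : H))⟫ - ⟪h', (A (Bf ((Bf b : H))) : H)⟫
      = ⟪(A (Bf h') : H), b⟫ - ⟪h', (A (Bf b) : H)⟫ := by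
    intro h' b
    rw [hkey (Bf b)]
    rw [← hBsym h' (A (Bf b) : H)]
    linear_combination (-1 : ℂ) * hE h' b
  have hvanish : ∀ h' : H, ∀ v ∈ M, ⟪(A (Bf h') : H), v⟫ - ⟪h', (A (Bf v) : H)⟫ = 0 := by
    intro h'
    have hspan : ∀ v ∈ Submodule.span ℂ (Set.range (fun b : H => b - ((Bf b : H)))),
        ⟪(A (Bf h') : H), v⟫ - ⟪h', (A (Bf v) : H)⟫ = 0 := by
      intro v hv
      induction hv using Submodule.span_induction with
      | mem x hx =>
        obtain ⟨b, rfl⟩ := hx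
        rw [hCsub, inner_sub_right, inner_sub_right]
        linear_combination - hred h' b
      | zero =>
        have hB0 : Bf 0 = 0 := by have := hBsmul 0 0; simpa using this
        rw [hB0]
        simp
      | add x y hx hy ihx ihy =>
        rw [hCadd, inner_add_right, inner_add_right]
        linear_combination ihx + ihy
      | smul c x hx ih =>
        rw [hCsmul, inner_smul_right, inner_smul_right]
        linear_combination c * ih
    intro v hv
    have hclosedZ : IsClosed {k : H | ⟪(A (Bf h') : H), k⟫ - ⟪h', (A (Bf k) : H)⟫ = 0} := by
      apply isClosed_eq
      · exact Continuous.sub (Continuous.inner continuous_const continuous_id) (Continuous.inner continuous_const hCcont)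
      · exact continuous_const
    have hsub : (M : Set H) ⊆ {k : H | ⟪(A (Bf h') : H), k⟫ - ⟪h', (A (Bf k) : H)⟫ = 0} := by
      rw [hM, Submodule.topologicalClosure_coe]
      exact closure_minimal (fun v hv => hspan v hv) hclosedZ
    exact hsub hv
  haveI : CompleteSpace M := (Submodule.isClosed_topologicalClosure (Submodule.span ℂ (Set.range (fun b : H => b - ((Bf b : H)))))).completeSpace_coe
  have hCsym : ∀ h k : H, ⟪A (Bf h), k⟫ = ⟪h, A (Bf k)⟫ := by
    intro h' k
    obtain ⟨y, hy, z, hz, hkzy⟩ := M.exists_add_mem_mem_orthogonal k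
    obtain ⟨y', hy', z', hz', hh⟩ := M.exists_add_mem_mem_orthogonal h'
    have hBz := hMperp z hz
    have hBz' := hMperp z' hz'
    have hCz := hCzero z hBz
    have hCz' := hCzero z' hBz'
    have hzh : ⟪z, (A (Bf h') : H)⟫ = 0 := by
      have e1 : ⟪(A (Bf z) : H), h'⟫ - ⟪z, (A (Bf h') : H)⟫ = 0 := by
        rw [hh, hCadd, inner_add_right, inner_add_right]
        have v1 := hvanish z y' hy'
        have v2 : ⟪(A (Bf z) : H), z'⟫ - ⟪z, (A (Bf z') : H)⟫ = 0 := by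
          rw [hCz, hCz']
          simp
        linear_combination v1 + v2
      rw [hCz] at e1
      simp only [inner_zero_left] at e1
      linear_combination -e1
    have hChz : ⟪(A (Bf h') : H), z⟫ = 0 := by
      rw [← inner_conj_symm, hzh]
      simp
    rw [hkzy, hCadd, inner_add_right, inner_add_right]
    have v3 := hvanish h' y hy
    have : ⟪h', (A (Bf z) : H)⟫ = 0 := by rw [hCz]; simp
    linear_combination v3 + hChz - this
  -- relations on the adjoint domain
  have hC_B : ∀ (y : A.adjoint.domain), A (Bf (y : H)) = ↑(Bf (A.adjoint y)) := by
    intro y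
    apply ext_inner_right ℂ
    intro v
    calc ⟪(A (Bf (y:H)) : H), v⟫ = ⟪(y:H), (A (Bf v) : H)⟫ := hCsym (y:H) v
      _ = ⟪(A.adjoint y : H), ((Bf v : H))⟫ := (fa y (Bf v)).symm
      _ = ⟪(↑(Bf (A.adjoint y)) : H), v⟫ := (hBsym (A.adjoint y) v).symm
  have hIB_C : ∀ (y : A.adjoint.domain), (y : H) - ↑(Bf (y : H)) = A (Bf (A.adjoint y)) := by
    intro y
    apply ext_inner_right ℂ
    intro v
    calc ⟪(y:H) - ↑(Bf (y:H)), v⟫ = ⟪(y:H), v - ↑(Bf v)⟫ := hSsym (y:H) v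
      _ = ⟪(y:H), (A (Cd v) : H)⟫ := by rw [hTT]
      _ = ⟪(A.adjoint y : H), ((Cd v : H))⟫ := (fa y (Cd v)).symm
      _ = ⟪(A.adjoint y : H), (A (Bf v) : H)⟫ := rfl
      _ = ⟪(A (Bf (A.adjoint y)) : H), v⟫ := (hCsym (A.adjoint y) v).symm
  -- A† ≤ A
  have hadj_le : A.adjoint ≤ A := by
    constructor
    · intro y hy
      have hy' := hIB_C ⟨y, hy⟩
      have hdecomp : y = ↑(Bf y) + (A (Bf (A.adjoint ⟨y, hy⟩)) : H) := by
        rw [← hy']; abel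
      rw [hdecomp]
      exact add_mem (Bf y).2 (hmemT _)
    · intro x y' hxy
      have hx' := hIB_C x
      have h1 : y' = Bf (x:H) + Cd (A.adjoint x) := by
        ext
        show (y' : H) = ↑(Bf (x:H)) + (A (Bf (A.adjoint x)) : H)
        rw [← hx', ← hxy]
        abel
      rw [h1, LinearPMap.map_add, hTT (A.adjoint x)]
      rw [show (A (Bf (x:H)) : H) = ↑(Bf (A.adjoint x)) from hC_B x]
      abel
  -- A is symmetric, hence A ≤ A†
  have hsymm : A.IsFormalAdjoint A := by
    intro x y
    have memD : (A (Cd (y:H)) : H) ∈ A.domain := by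
      rw [hTT]; exact sub_mem y.2 (Bf (y:H)).2
    have memAdj : (A (Cd (y:H)) : H) ∈ A.adjoint.domain := (hdom (Cd (y:H))).mpr memD
    have t1 : ⟪(A x : H), (↑(Bf (y:H)) : H)⟫ = ⟪(x:H), (A (Bf (y:H)) : H)⟫ := by
      calc ⟪(A x : H), (↑(Bf (y:H)) : H)⟫ = ⟪(↑(Bf (A x)) : H), (y:H)⟫ := (hBsym (A x) (y:H)).symm
        _ = ⟪(A (Bf (x:H)) : H), (y:H)⟫ := by rw [← hkey x]
        _ = ⟪(x:H), (A (Bf (y:H)) : H)⟫ := hCsym (x:H) (y:H)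
    have t2 : ⟪(A x : H), (A (Cd (y:H)) : H)⟫
        = ⟪(x:H), (A y : H)⟫ - ⟪(x:H), (A (Bf (y:H)) : H)⟫ := by
      have hsub2 : (⟨A (Cd (y:H)), memD⟩ : A.domain) = y - Bf (y:H) := by
        ext
        rw [show ((⟨A (Cd (y:H)), memD⟩ : A.domain) : H) = A (Cd (y:H)) from rfl, hTT]
        push_cast
        rfl
      calc ⟪(A x : H), (A (Cd (y:H)) : H)⟫
          = conj ⟪(A (Cd (y:H)) : H), (A x : H)⟫ := (inner_conj_symm _ _).symm
        _ = conj ⟪(A.adjoint ⟨A (Cd (y:H)), memAdj⟩ : H), (x:H)⟫ := by rw [fa ⟨A (Cd (y:H)), memAdj⟩ x]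
        _ = ⟪(x:H), (A.adjoint ⟨A (Cd (y:H)), memAdj⟩ : H)⟫ := inner_conj_symm _ _
        _ = ⟪(x:H), (A ⟨A (Cd (y:H)), memD⟩ : H)⟫ := by rw [hval (Cd (y:H)) memAdj memD]
        _ = ⟪(x:H), (A y : H) - (A (Bf (y:H)) : H)⟫ := by rw [hsub2, LinearPMap.map_sub]
        _ = ⟪(x:H), (A y : H)⟫ - ⟪(x:H), (A (Bf (y:H)) : H)⟫ := inner_sub_right _ _ _
    have hy : ((y : H)) = ↑(Bf (y:H)) + (A (Cd (y:H)) : H) := by rw [hTT]; abel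
    calc ⟪(A x : H), ((y:H))⟫ = ⟪(A x : H), ↑(Bf (y:H)) + (A (Cd (y:H)) : H)⟫ := by rw [← hy]
      _ = ⟪(A x : H), (↑(Bf (y:H)) : H)⟫ + ⟪(A x : H), (A (Cd (y:H)) : H)⟫ := inner_add_right _ _ _
      _ = ⟪(x:H), (A y : H)⟫ := by rw [t1, t2]; ring
  have hle_adj : A ≤ A.adjoint := hsymm.le_adjoint hdense
  exact LinearPMap.isSelfAdjoint_def.mpr (le_antisymm hadj_le hle_adj)
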